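/- Let n be a positive integer and α > n/2 a real number. There exists a constant C > 0, depending only on n and α, such that the following holds for every positive integer N. Let u : ℤ^n → ℂ satisfy Σ_{k∈ℤ^n} (1+‖k‖₂^{4α}) |u_k|² < ∞, and let U(y) = Σ_{k∈ℤ^n} u_k e^{ik·y} (which converges absolutely and uniformly on ℝ^n). Let K_N = {k ∈ ℤ^n : −N ≤ k_j < N for all j}, let the grid points be y_j = (π/N) j for j ∈ {0,1,…,2N−1}^n, define the discrete Fourier coefficients ũ_k = (2N)^{-n} Σ_j U(y_j) e^{−ik·y_j} for k ∈ K_N, and the trigonometric interpolant (I_N U)(y) = Σ_{k∈K_N} ũ_k e^{ik·y}. Then ‖I_N U − U‖ ≤ C N^{−α} (Σ_{k∈ℤ^n} ‖k‖₂^{4α} |u_k|²)^{1/2}. -/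

import Mathlib

open MeasureTheory
open scoped Real ENNReal

/-- The Fourier series with coefficients `u`. -/
noncomputable def fourierSeries (n : ℕ) (u : (Fin n → ℤ) → ℂ) (y : Fin n → ℝ) : ℂ :=
  ∑' k : Fin n → ℤ, u k * Complex.exp (Complex.I * ((∑ j, (k j : ℝ) * y j : ℝ) : ℂ))

/-- The normalized `L²` norm of a `2π`-periodic function over one period cell. -/
noncomputable def L2NormPeriodic (n : ℕ) (f : (Fin n → ℝ) → ℂ) : ℝ :=
  Real.sqrt ((((2 * π) ^ n)⁻¹ : ℝ) *
    ∫ y in Set.Icc (0 : Fin n → ℝ) (fun _ => 2 * π), ‖f y‖ ^ 2)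

/-- The trigonometric interpolant `I_N U` of `U` on the uniform grid with `2N`
points per coordinate: `(I_N U)(y) = Σ_{k ∈ K_N} ũ_k e^{ik·y}` with discrete
Fourier coefficients `ũ_k = (2N)^{-n} Σ_j U(y_j) e^{-ik·y_j}`, the frequencies
`k ∈ K_N` being indexed by `m : Fin n → Fin (2N)` via `k i = m i - N`. -/
noncomputable def trigInterpolant (n N : ℕ) (U : (Fin n → ℝ) → ℂ)
    (y : Fin n → ℝ) : ℂ :=
  ∑ m : Fin n → Fin (2 * N),
    ((((2 * N : ℕ) : ℝ) ^ n)⁻¹ •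
      ∑ j : Fin n → Fin (2 * N),
        U (fun i => (π / (N : ℝ)) * ((j i : ℕ) : ℝ)) *
          Complex.exp (-Complex.I *
            ((∑ i, (((m i : ℕ) : ℝ) - (N : ℝ)) * ((π / (N : ℝ)) * ((j i : ℕ) : ℝ)) : ℝ) : ℂ))) *
      Complex.exp (Complex.I * ((∑ i, (((m i : ℕ) : ℝ) - (N : ℝ)) * y i : ℝ) : ℂ))

lemma summable_one_add_abs_int_rpow {p : ℝ} (hp : 1 < p) :
    Summable (fun m : ℤ => ((1 + |(m : ℝ)|)) ^ (-p)) := by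
  have hnat : Summable (fun n : ℕ => ((1 + (n : ℝ))) ^ (-p)) := by
    have h := (Real.summable_nat_rpow (p := -p)).2 (by linarith)
    have := h.comp_injective (add_right_injective 1)
    refine this.congr fun m => ?_
    simp only [Function.comp_apply]
    norm_cast
  apply Summable.of_nat_of_neg
  · simpa using hnat
  · simpa using hnat

/-- Product over coordinates is summable on `ℤ^n`. -/
lemma summable_pi_prod {p : ℝ} (hp : 1 < p) (n : ℕ) :
    Summable (fun k : Fin n → ℤ => ∏ j, ((1 + |((k j : ℤ) : ℝ)|)) ^ (-p)) := by
  induction n with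
  | zero => simp [Summable]; exact ⟨1, by simpa using hasSum_fintype (fun k : Fin 0 → ℤ => (1:ℝ))⟩
  | succ n ih =>
      have h1 := summable_one_add_abs_int_rpow hp
      have hprod := (h1.mul_of_nonneg ih (fun m => Real.rpow_nonneg (by positivity) _)
        (fun k => Finset.prod_nonneg fun j _ => Real.rpow_nonneg (by positivity) _))
      have := (Fin.consEquiv fun _ => ℤ).symm.summable_iff.2 hprod
      simpa [Fin.prod_univ_succ, Fin.consEquiv, Function.comp_def, Fin.tail] using this

/-- Euclidean norm of a lattice point. -/
noncomputable def znrm (n : ℕ) (k : Fin n → ℤ) : ℝ := Real.sqrt (∑ j, ((k j : ℝ)) ^ 2)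

lemma znrm_nonneg (n : ℕ) (k : Fin n → ℤ) : 0 ≤ znrm n k := Real.sqrt_nonneg _

lemma abs_le_znrm (n : ℕ) (k : Fin n → ℤ) (j : Fin n) : |((k j : ℝ))| ≤ znrm n k := by
  rw [znrm, ← Real.sqrt_sq_eq_abs]
  exact Real.sqrt_le_sqrt (Finset.single_le_sum (f := fun j => ((k j:ℝ))^2)
    (fun i _ => sq_nonneg _) (Finset.mem_univ j))

lemma one_le_znrm {n : ℕ} {k : Fin n → ℤ} (hk : k ≠ 0) : 1 ≤ znrm n k := by
  obtain ⟨j, hj⟩ : ∃ j, k j ≠ 0 := by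
    by_contra h; push_neg at h; exact hk (funext h)
  have : (1:ℝ) ≤ |((k j : ℝ))| := by
    rw [← Int.cast_abs]; exact_mod_cast Int.one_le_abs hj
  exact this.trans (abs_le_znrm n k j)

/-- Key comparison: `max(1,‖k‖)^(-s) ≤ 2^s ∏_j (1+|k_j|)^(-s/n)`. -/
lemma max_znrm_rpow_le {n : ℕ} (hn : 0 < n) {s : ℝ} (hs : 0 < s) (k : Fin n → ℤ) :
    (max 1 (znrm n k)) ^ (-s) ≤ (2:ℝ)^s * ∏ j, ((1 + |((k j : ℝ))|)) ^ (-(s/n)) := by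
  set M : ℝ := max 1 (znrm n k) with hM
  have hM1 : (1:ℝ) ≤ M := le_max_left _ _
  have hMpos : (0:ℝ) < M := lt_of_lt_of_le one_pos hM1
  have h1 : ∀ j : Fin n, (1 + |((k j : ℝ))|) / 2 ≤ M := by
    intro j
    have h2 : |((k j : ℝ))| ≤ M := (abs_le_znrm n k j).trans (le_max_right _ _)
    linarith
  have h2 : ∏ j : Fin n, ((1 + |((k j : ℝ))|) / 2) ≤ M ^ n := by
    calc ∏ j : Fin n, ((1 + |((k j : ℝ))|) / 2) ≤ ∏ _j : Fin n, M :=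
          Finset.prod_le_prod (fun j _ => by positivity) (fun j _ => h1 j)
      _ = M ^ n := by simp
  have hrp : (∏ j : Fin n, ((1 + |((k j : ℝ))|) / 2)) ^ (s / n) ≤ (M ^ n) ^ (s/n) :=
    Real.rpow_le_rpow (Finset.prod_nonneg fun j _ => by positivity) h2 (by positivity)
  have hMn : (M ^ n : ℝ) ^ (s/n) = M ^ s := by
    rw [← Real.rpow_natCast M n, ← Real.rpow_mul hMpos.le]
    congr 1
    field_simp
  have hprodrw : (∏ j : Fin n, ((1 + |((k j : ℝ))|) / 2)) ^ (s / n)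
      = (2:ℝ)^(-s) * ∏ j, ((1 + |((k j : ℝ))|)) ^ (s/n) := by
    rw [← Real.finset_prod_rpow _ _ (fun j _ => by positivity)]
    have : ∀ j : Fin n, ((1 + |((k j : ℝ))|) / 2) ^ (s/n)
        = ((1 + |((k j : ℝ))|)) ^ (s/n) * ((2:ℝ)^(s/n))⁻¹ := by
      intro j
      rw [div_eq_mul_inv, Real.mul_rpow (by positivity) (by positivity),
        Real.inv_rpow (by norm_num)]
    rw [Finset.prod_congr rfl (fun j _ => this j), Finset.prod_mul_distrib]
    have h2n : (((2:ℝ)^(s/n))⁻¹) ^ (Finset.univ (α := Fin n)).card = (2:ℝ)^(-s) := by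
      rw [Finset.card_univ, Fintype.card_fin, ← Real.rpow_neg (by norm_num),
        ← Real.rpow_natCast ((2:ℝ)^(-(s/n))) n, ← Real.rpow_mul (by norm_num)]
      congr 1
      field_simp
    rw [Finset.prod_const, h2n, mul_comm]
  -- combine
  have key : (2:ℝ)^(-s) * ∏ j, ((1 + |((k j : ℝ))|)) ^ (s/n) ≤ M ^ s := by
    rw [← hprodrw, ← hMn]; exact hrp
  have hprodpos : (0:ℝ) < ∏ j, ((1 + |((k j : ℝ))|)) ^ (s/n) :=
    Finset.prod_pos fun j _ => Real.rpow_pos_of_pos (by positivity) _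
  rw [Real.rpow_neg hMpos.le]
  rw [inv_le_iff_one_le_mul₀ (Real.rpow_pos_of_pos hMpos s)]
  calc (1:ℝ) = ((2:ℝ)^(-s) * ∏ j, ((1 + |((k j : ℝ))|)) ^ (s/n)) *
        ((2:ℝ)^s * ∏ j, ((1 + |((k j : ℝ))|)) ^ (-(s/n))) := by
        rw [mul_mul_mul_comm, ← Real.rpow_add (by norm_num), neg_add_cancel, Real.rpow_zero,
          one_mul, ← Finset.prod_mul_distrib]
        rw [Finset.prod_congr rfl (fun j _ => by
          rw [← Real.rpow_add (by positivity : (0:ℝ) < 1 + |((k j : ℝ))|), add_neg_cancel,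
            Real.rpow_zero])]
        simp
    _ ≤ M ^ s * ((2:ℝ)^s * ∏ j, ((1 + |((k j : ℝ))|)) ^ (-(s/n))) := by
        apply mul_le_mul_of_nonneg_right key
        positivity
    _ = ((2:ℝ)^s * ∏ j, ((1 + |((k j : ℝ))|)) ^ (-(s/n))) * M ^ s := by ring

lemma summable_max_znrm_rpow {n : ℕ} (hn : 0 < n) {s : ℝ} (hs : (n : ℝ) < s) :
    Summable (fun k : Fin n → ℤ => (max 1 (znrm n k)) ^ (-s)) := by
  have hp : (1:ℝ) < s / n := by
    rw [lt_div_iff₀ (by exact_mod_cast hn)]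
    linarith
  have hspos : 0 < s := lt_of_le_of_lt (by positivity) hs
  apply Summable.of_nonneg_of_le (fun k => Real.rpow_nonneg (by positivity) _)
    (fun k => max_znrm_rpow_le hn hspos k)
  exact (summable_pi_prod hp n).mul_left _

lemma one_add_rpow_inv_le {n : ℕ} {s : ℝ} (hs : 0 < s) (k : Fin n → ℤ) :
    (1 + (znrm n k) ^ s)⁻¹ ≤ (max 1 (znrm n k)) ^ (-s) := by
  have h0 : 0 ≤ znrm n k := znrm_nonneg n k
  have hmax : (max 1 (znrm n k)) ^ s ≤ 1 + (znrm n k) ^ s := by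
    rcases le_total (znrm n k) 1 with h | h
    · rw [max_eq_left h, Real.one_rpow]
      have : 0 ≤ (znrm n k) ^ s := Real.rpow_nonneg h0 _
      linarith
    · rw [max_eq_right h]
      linarith [Real.rpow_nonneg h0 s]
  rw [Real.rpow_neg (le_trans zero_le_one (le_max_left _ _))]
  exact inv_anti₀ (Real.rpow_pos_of_pos (lt_of_lt_of_le one_pos (le_max_left _ _)) s) hmax

lemma summable_one_add_znrm_rpow_inv {n : ℕ} (hn : 0 < n) {s : ℝ} (hs : (n:ℝ) < s) :
    Summable (fun k : Fin n → ℤ => (1 + (znrm n k) ^ s)⁻¹) := by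
  have hspos : 0 < s := lt_of_le_of_lt (by positivity) hs
  exact Summable.of_nonneg_of_le
    (fun k => inv_nonneg.2 (add_nonneg zero_le_one (Real.rpow_nonneg (znrm_nonneg n k) s)))
    (fun k => one_add_rpow_inv_le hspos k) (summable_max_znrm_rpow hn hs)

lemma dft_sum {N : ℕ} (hN : 0 < N) (d : ℤ) :
    ∑ a : Fin (2 * N), Complex.exp (Complex.I * ((d : ℂ) * (π / N) * (a : ℕ)))
      = if (2 * (N:ℤ)) ∣ d then ((2 * N : ℕ) : ℂ) else 0 := by
  have hNne : ((N:ℂ)) ≠ 0 := by exact_mod_cast hN.ne'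
  set z : ℂ := Complex.exp (Complex.I * ((d : ℂ) * (π / N))) with hz
  have hterm : ∀ a : Fin (2 * N), Complex.exp (Complex.I * ((d : ℂ) * (π / N) * (a : ℕ)))
      = z ^ (a : ℕ) := by
    intro a
    rw [hz, ← Complex.exp_nat_mul]
    ring_nf
  rw [Finset.sum_congr rfl (fun a _ => hterm a)]
  rw [Fin.sum_univ_eq_sum_range (fun i => z ^ i) (2 * N)]
  by_cases hd : (2 * (N:ℤ)) ∣ d
  · obtain ⟨c, hc⟩ := hd
    have hz1 : z = 1 := by
      rw [hz, hc]
      have : Complex.I * ((((2 * (N:ℤ) * c : ℤ)) : ℂ) * (π / N)) = (c:ℂ) * (2 * π * Complex.I) := by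
        push_cast
        field_simp
      rw [this, Complex.exp_int_mul_two_pi_mul_I]
    rw [if_pos ⟨c, hc⟩, hz1]
    simp
  · have hz1 : z ≠ 1 := by
      intro h
      rw [hz, Complex.exp_eq_one_iff] at h
      obtain ⟨m, hm⟩ := h
      apply hd
      refine ⟨m, ?_⟩
      have hπ : (π : ℂ) ≠ 0 := by exact_mod_cast Real.pi_ne_zero
      have key : (d:ℂ) * ((π:ℂ) * Complex.I) = (2*(N:ℂ)*m) * ((π:ℂ) * Complex.I) := by
        field_simp at hm
        linear_combination ((π:ℂ) * Complex.I) * hm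
      have := mul_right_cancel₀ (mul_ne_zero hπ Complex.I_ne_zero) key
      exact_mod_cast this
    have hzM : z ^ (2 * N) = 1 := by
      rw [hz, ← Complex.exp_nat_mul]
      have : (2 * N : ℕ) * (Complex.I * ((d : ℂ) * (π / N))) = (d:ℂ) * (2 * π * Complex.I) := by
        push_cast
        field_simp
      rw [this]
      exact_mod_cast Complex.exp_int_mul_two_pi_mul_I d
    rw [geom_sum_eq hz1, hzM, if_neg hd]
    simp

/-- Cauchy–Schwarz for tsums of nonnegative reals. -/
lemma tsum_mul_le_sqrt_mul_sqrt {ι : Type*} (f g : ι → ℝ) (hf0 : ∀ i, 0 ≤ f i)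
    (hg0 : ∀ i, 0 ≤ g i) (hf : Summable (fun i => f i ^ 2)) (hg : Summable (fun i => g i ^ 2)) :
    (∑' i, f i * g i) ≤ Real.sqrt (∑' i, f i ^ 2) * Real.sqrt (∑' i, g i ^ 2) := by
  have hfg : Summable (fun i => f i * g i) := by
    apply Summable.of_nonneg_of_le (fun i => mul_nonneg (hf0 i) (hg0 i))
      (fun i => ?_) ((hf.add hg).div_const 2)
    have := two_mul_le_add_sq (f i) (g i)
    linarith
  refine Summable.tsum_le_of_sum_le hfg (fun s => ?_)
  have h1 : (∑ i ∈ s, f i * g i) ^ 2 ≤ (∑ i ∈ s, f i ^ 2) * ∑ i ∈ s, g i ^ 2 :=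
    Finset.sum_mul_sq_le_sq_mul_sq s f g
  have h2 : (∑ i ∈ s, f i ^ 2) ≤ ∑' i, f i ^ 2 := Summable.sum_le_tsum s (fun i _ => sq_nonneg _) hf
  have h3 : (∑ i ∈ s, g i ^ 2) ≤ ∑' i, g i ^ 2 := Summable.sum_le_tsum s (fun i _ => sq_nonneg _) hg
  have h4 : (0:ℝ) ≤ ∑ i ∈ s, f i * g i :=
    Finset.sum_nonneg fun i _ => mul_nonneg (hf0 i) (hg0 i)
  calc (∑ i ∈ s, f i * g i) = Real.sqrt ((∑ i ∈ s, f i * g i)^2) := (Real.sqrt_sq h4).symm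
    _ ≤ Real.sqrt ((∑' i, f i ^ 2) * ∑' i, g i ^ 2) := by
        apply Real.sqrt_le_sqrt
        calc (∑ i ∈ s, f i * g i) ^ 2 ≤ (∑ i ∈ s, f i ^ 2) * ∑ i ∈ s, g i ^ 2 := h1
          _ ≤ (∑' i, f i ^ 2) * ∑' i, g i ^ 2 := by
              apply mul_le_mul h2 h3 (Finset.sum_nonneg fun i _ => sq_nonneg _)
              exact tsum_nonneg fun i => sq_nonneg _
    _ = Real.sqrt (∑' i, f i ^ 2) * Real.sqrt (∑' i, g i ^ 2) := Real.sqrt_mul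
        (tsum_nonneg fun i => sq_nonneg _) _

/-- `L²` norm bounded by a uniform bound. -/
lemma L2NormPeriodic_le_of_bound (n : ℕ) (f : (Fin n → ℝ) → ℂ) (hf : Continuous f)
    (B : ℝ) (hB : 0 ≤ B) (h : ∀ y, ‖f y‖ ≤ B) : L2NormPeriodic n f ≤ B := by
  set s : Set (Fin n → ℝ) := Set.Icc (0 : Fin n → ℝ) (fun _ => 2 * π) with hs
  have hvol : volume s = ∏ _i : Fin n, ENNReal.ofReal (2 * π) := by
    rw [hs, Real.volume_Icc_pi]
    simp
  have hvolfin : volume s < ∞ := by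
    rw [hvol]
    exact ENNReal.prod_lt_top fun i _ => ENNReal.ofReal_lt_top
  have hvolval : (volume s).toReal = (2 * π) ^ n := by
    rw [hvol, ENNReal.toReal_prod]
    simp [ENNReal.toReal_ofReal Real.two_pi_pos.le, ENNReal.toReal_ofReal Real.pi_pos.le]
  have hbound : ∀ y ∈ s, ‖(‖f y‖ ^ 2 : ℝ)‖ ≤ B ^ 2 := by
    intro y _
    rw [Real.norm_eq_abs, abs_of_nonneg (by positivity)]
    exact pow_le_pow_left₀ (norm_nonneg _) (h y) 2
  have hmeas : AEStronglyMeasurable (fun y => (‖f y‖^2 : ℝ)) (volume.restrict s) :=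
    ((hf.norm.pow 2)).aestronglyMeasurable
  have hInt : ‖∫ y in s, (‖f y‖^2 : ℝ)‖ ≤ B ^ 2 * (volume s).toReal :=
    norm_setIntegral_le_of_norm_le_const hvolfin hbound
  have hI : (∫ y in s, (‖f y‖^2 : ℝ)) ≤ B^2 * (2*π)^n := by
    rw [← hvolval]
    exact (le_abs_self _).trans (by simpa [Real.norm_eq_abs] using hInt)
  rw [L2NormPeriodic]
  rw [show ((((2 * π) ^ n)⁻¹ : ℝ)) = ((2*π)^n)⁻¹ by norm_num]
  calc Real.sqrt (((2*π)^n)⁻¹ * ∫ y in s, (‖f y‖^2 : ℝ))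
      ≤ Real.sqrt (((2*π)^n)⁻¹ * (B^2 * (2*π)^n)) := by
        apply Real.sqrt_le_sqrt
        apply mul_le_mul_of_nonneg_left hI
        positivity
    _ = B := by
        rw [show ((2*π)^n)⁻¹ * (B^2 * (2*π)^n) = B^2 by
          field_simp]
        exact Real.sqrt_sq hB

lemma exists_unique_res {n N : ℕ} (hN : 0 < N) (l : Fin n → ℤ) :
    ∃! m : Fin n → Fin (2*N), ∀ i, (2*(N:ℤ)) ∣ (l i - ((m i : ℤ) - (N:ℤ))) := by
  have h2N : (0:ℤ) < 2 * N := by positivity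
  refine ⟨fun i => ⟨((l i + N) % (2*(N:ℤ))).toNat, by
    have h1 := Int.emod_nonneg (l i + N) h2N.ne'
    have h2 := Int.emod_lt_of_pos (l i + N) h2N
    omega⟩, fun i => ?_, ?_⟩
  · have h1 := Int.emod_nonneg (l i + N) h2N.ne'
    have hcast : ((((l i + N) % (2*(N:ℤ))).toNat : ℤ)) = (l i + N) % (2*(N:ℤ)) :=
      Int.toNat_of_nonneg h1
    simp only [hcast]
    have : l i - ((l i + N) % (2*(N:ℤ)) - N) = (l i + N) - (l i + N) % (2*(N:ℤ)) := by ring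
    rw [this]
    exact Int.dvd_self_sub_of_emod_eq rfl
  · intro m' hm'
    funext i
    have key : (2*(N:ℤ)) ∣ ((((l i + N) % (2*(N:ℤ))).toNat : ℤ) - (m' i : ℤ)) := by
      have h1 := Int.emod_nonneg (l i + N) h2N.ne'
      have hcast : ((((l i + N) % (2*(N:ℤ))).toNat : ℤ)) = (l i + N) % (2*(N:ℤ)) :=
        Int.toNat_of_nonneg h1
      rw [hcast]
      have hd1 := hm' i
      have hd2 : (2*(N:ℤ)) ∣ ((l i + N) - (l i + N) % (2*(N:ℤ))) := Int.dvd_self_sub_of_emod_eq rfl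
      have hcomb := Int.dvd_sub hd2 (show (2*(N:ℤ)) ∣ ((l i + N) - (m' i : ℤ)) by
        have : l i - ((m' i : ℤ) - N) = (l i + N) - (m' i : ℤ) := by ring
        rwa [this] at hd1)
      have heq : (l i + N) % (2*(N:ℤ)) - (m' i : ℤ)
          = -(((l i + N) - (l i + N) % (2*(N:ℤ))) - ((l i + N) - (m' i : ℤ))) := by ring
      rw [heq]
      exact hcomb.neg_right
    have hlt1 : ((((l i + N) % (2*(N:ℤ))).toNat : ℤ)) < 2*N := by
      have h1 := Int.emod_nonneg (l i + N) h2N.ne'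
      have h2 := Int.emod_lt_of_pos (l i + N) h2N
      omega
    have hlt2 : ((m' i : ℤ)) < 2*N := by exact_mod_cast (m' i).isLt
    have h0 : (0:ℤ) ≤ ((((l i + N) % (2*(N:ℤ))).toNat : ℤ)) := Int.natCast_nonneg _
    have h0' : (0:ℤ) ≤ ((m' i : ℤ)) := Int.natCast_nonneg _
    have := Int.eq_zero_of_abs_lt_dvd key (by rw [abs_lt]; omega)
    have hval : (((l i + N) % (2*(N:ℤ))).toNat : ℤ) = (m' i : ℤ) := by omega
    apply Fin.ext
    show (m' i : ℕ) = ((l i + N) % (2*(N:ℤ))).toNat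
    omega

lemma norm_exp_I_mul (r : ℝ) : ‖Complex.exp (Complex.I * (r:ℂ))‖ = 1 := by
  rw [Complex.norm_exp]
  simp [Complex.mul_re]

lemma prod_ite_zero {n : ℕ} (P : Fin n → Prop) [DecidablePred P] (c : ℂ) :
    (∏ i, if P i then c else 0) = if (∀ i, P i) then c ^ n else 0 := by
  by_cases h : ∀ i, P i
  · rw [if_pos h, Finset.prod_congr rfl (fun i _ => if_pos (h i))]
    simp
  · rw [if_neg h]
    push_neg at h
    obtain ⟨i, hi⟩ := h
    exact Finset.prod_eq_zero (Finset.mem_univ i) (if_neg hi)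

lemma exp_I_sum_mul {ι : Type*} [Fintype ι] (a b : ι → ℝ) :
    Complex.exp (Complex.I * ((∑ i, a i : ℝ) : ℂ)) *
      Complex.exp (-Complex.I * ((∑ i, b i : ℝ) : ℂ))
    = ∏ i, Complex.exp (Complex.I * (((a i - b i : ℝ)) : ℂ)) := by
  rw [← Complex.exp_sum, ← Complex.exp_add]
  congr 1
  push_cast
  rw [Finset.mul_sum, neg_mul, Finset.mul_sum, ← Finset.sum_neg_distrib, ← Finset.sum_add_distrib]
  exact Finset.sum_congr rfl fun i _ => by ring

lemma coeff_eq {n N : ℕ} (hN : 0 < N) (u : (Fin n → ℤ) → ℂ)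
    (habs : Summable fun l => ‖u l‖) (m : Fin n → Fin (2*N)) :
    ((((2 * N : ℕ) : ℝ) ^ n)⁻¹ •
      ∑ j : Fin n → Fin (2 * N),
        fourierSeries n u (fun i => (π / (N : ℝ)) * ((j i : ℕ) : ℝ)) *
          Complex.exp (-Complex.I *
            ((∑ i, (((m i : ℕ) : ℝ) - (N : ℝ)) * ((π / (N : ℝ)) * ((j i : ℕ) : ℝ)) : ℝ) : ℂ)))
    = ∑' l : Fin n → ℤ,
        (if ∀ i, (2*(N:ℤ)) ∣ (l i - ((m i : ℤ) - (N:ℤ))) then u l else 0) := by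
  -- the summand as a product of 1-dim exponentials
  have hterm : ∀ (j : Fin n → Fin (2*N)),
      fourierSeries n u (fun i => (π / (N : ℝ)) * ((j i : ℕ) : ℝ)) *
        Complex.exp (-Complex.I *
          ((∑ i, (((m i : ℕ) : ℝ) - (N : ℝ)) * ((π / (N : ℝ)) * ((j i : ℕ) : ℝ)) : ℝ) : ℂ))
      = ∑' l : Fin n → ℤ, u l * ∏ i, Complex.exp (Complex.I *
          ((((l i - ((m i : ℤ) - (N:ℤ)) : ℤ) : ℝ) * (π / (N:ℝ)) * ((j i : ℕ) : ℝ) : ℝ) : ℂ)) := by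
    intro j
    rw [fourierSeries, ← tsum_mul_right]
    congr 1
    funext l
    rw [mul_assoc]
    congr 1
    rw [exp_I_sum_mul (fun i => ((l i : ℝ)) * ((π / (N : ℝ)) * ((j i : ℕ) : ℝ)))
      (fun i => (((m i : ℕ) : ℝ) - (N : ℝ)) * ((π / (N : ℝ)) * ((j i : ℕ) : ℝ)))]
    exact Finset.prod_congr rfl fun i _ => by
      congr 2
      push_cast
      ring
  rw [Finset.sum_congr rfl (fun j _ => hterm j)]
  -- swap the finite sum and the tsum
  have hsummable : ∀ j : Fin n → Fin (2*N), Summable (fun l : Fin n → ℤ =>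
      u l * ∏ i, Complex.exp (Complex.I *
        ((((l i - ((m i : ℤ) - (N:ℤ)) : ℤ) : ℝ) * (π / (N:ℝ)) * ((j i : ℕ) : ℝ) : ℝ) : ℂ))) := by
    intro j
    apply Summable.of_norm_bounded habs
    intro l
    rw [norm_mul, norm_prod]
    simp only [norm_exp_I_mul]
    simp
  rw [← Summable.tsum_finsetSum (fun j _ => hsummable j)]
  -- transform the inner finite sum
  have hinner : ∀ l : Fin n → ℤ,
      (∑ j : Fin n → Fin (2*N), u l * ∏ i, Complex.exp (Complex.I *
        ((((l i - ((m i : ℤ) - (N:ℤ)) : ℤ) : ℝ) * (π / (N:ℝ)) * ((j i : ℕ) : ℝ) : ℝ) : ℂ)))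
      = u l * (if ∀ i, (2*(N:ℤ)) ∣ (l i - ((m i : ℤ) - (N:ℤ)))
          then ((2 * N : ℕ) : ℂ) ^ n else 0) := by
    intro l
    rw [← Finset.mul_sum]
    congr 1
    have hswap : (∑ j : Fin n → Fin (2*N), ∏ i, Complex.exp (Complex.I *
        ((((l i - ((m i : ℤ) - (N:ℤ)) : ℤ) : ℝ) * (π / (N:ℝ)) * ((j i : ℕ) : ℝ) : ℝ) : ℂ)))
        = ∏ i, ∑ a : Fin (2*N), Complex.exp (Complex.I *
          ((((l i - ((m i : ℤ) - (N:ℤ)) : ℤ) : ℝ) * (π / (N:ℝ)) * ((a : ℕ) : ℝ) : ℝ) : ℂ)) := by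
      rw [Finset.prod_univ_sum]
      rw [Fintype.piFinset_univ]
    rw [hswap]
    have hdft : ∀ i : Fin n, (∑ a : Fin (2*N), Complex.exp (Complex.I *
        ((((l i - ((m i : ℤ) - (N:ℤ)) : ℤ) : ℝ) * (π / (N:ℝ)) * ((a : ℕ) : ℝ) : ℝ) : ℂ)))
        = if (2*(N:ℤ)) ∣ (l i - ((m i : ℤ) - (N:ℤ))) then ((2 * N : ℕ) : ℂ) else 0 := by
      intro i
      rw [← dft_sum hN (l i - ((m i : ℤ) - (N:ℤ)))]
      exact Finset.sum_congr rfl fun a _ => by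
        congr 2
        push_cast
        ring
    rw [Finset.prod_congr rfl (fun i _ => hdft i)]
    exact prod_ite_zero _ _
  rw [tsum_congr hinner]
  -- distribute the scalar
  have h2Nn : (((2 * N : ℕ) : ℂ)) ^ n ≠ 0 := by
    apply pow_ne_zero
    exact_mod_cast (by positivity : (0:ℝ) < ((2*N : ℕ) : ℝ)).ne'
  rw [Complex.real_smul]
  rw [← tsum_mul_left]
  congr 1
  funext l
  have hcast : ((((((2 * N : ℕ) : ℝ)) ^ n)⁻¹ : ℝ) : ℂ) = (((2 * N : ℕ) : ℂ) ^ n)⁻¹ := by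
    push_cast
    ring
  by_cases h : ∀ i, (2*(N:ℤ)) ∣ (l i - ((m i : ℤ) - (N:ℤ)))
  · rw [if_pos h, if_pos h, hcast, mul_comm (u l), ← mul_assoc, inv_mul_cancel₀ h2Nn, one_mul]
  · rw [if_neg h, if_neg h]
    simp

lemma pointwise_bound {n N : ℕ} (hN : 0 < N) (u : (Fin n → ℤ) → ℂ)
    (habs : Summable fun l => ‖u l‖) (y : Fin n → ℝ) :
    ‖trigInterpolant n N (fourierSeries n u) y - fourierSeries n u y‖
      ≤ ∑' l : Fin n → ℤ, (if znrm n l < (N:ℝ) then 0 else 2 * ‖u l‖) := by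
  classical
  set E : (Fin n → ℤ) → ℂ :=
    fun k => Complex.exp (Complex.I * ((∑ i, ((k i : ℝ)) * y i : ℝ) : ℂ)) with hE
  have hEnorm : ∀ k, ‖E k‖ = 1 := fun k => norm_exp_I_mul _
  set R : (Fin n → ℤ) → (Fin n → Fin (2*N)) → Prop :=
    fun l m => ∀ i, (2*(N:ℤ)) ∣ (l i - ((m i : ℤ) - (N:ℤ))) with hR
  set kk : (Fin n → Fin (2*N)) → (Fin n → ℤ) := fun m i => (m i : ℤ) - N with hkk
  -- Step 2 : the interpolant
  have step2 : trigInterpolant n N (fourierSeries n u) y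
      = ∑ m : Fin n → Fin (2*N), ∑' l : Fin n → ℤ,
          (if R l m then u l else 0) * E (kk m) := by
    rw [trigInterpolant]
    refine Finset.sum_congr rfl fun m _ => ?_
    rw [coeff_eq hN u habs m, ← tsum_mul_right]
    refine tsum_congr fun l => ?_
    congr 1
    rw [hE, hkk]
    congr 2
    push_cast
    ring_nf
  -- Step 3 : the Fourier series
  have hressum : ∀ l : Fin n → ℤ,
      (∑ m : Fin n → Fin (2*N), if R l m then u l * E l else 0) = u l * E l := by
    intro l
    obtain ⟨m₀, hm₀, huniq⟩ := exists_unique_res hN l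
    rw [Finset.sum_eq_single m₀]
    · exact if_pos hm₀
    · intro b _ hb
      exact if_neg (fun hRb => hb (huniq b hRb))
    · intro hnot
      exact absurd (Finset.mem_univ m₀) hnot
  have hsum_ite : ∀ m : Fin n → Fin (2*N), Summable (fun l : Fin n → ℤ =>
      if R l m then u l * E l else 0) := by
    intro m
    apply Summable.of_norm_bounded habs
    intro l
    by_cases h : R l m
    · rw [if_pos h, norm_mul, hEnorm, mul_one]
    · simp [if_neg h]
  have step3 : fourierSeries n u y
      = ∑ m : Fin n → Fin (2*N), ∑' l : Fin n → ℤ, (if R l m then u l * E l else 0) := by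
    rw [← Summable.tsum_finsetSum (fun m _ => hsum_ite m)]
    rw [fourierSeries]
    exact tsum_congr fun l => (hressum l).symm
  -- Step 4 : combine
  have hsum_ite2 : ∀ m : Fin n → Fin (2*N), Summable (fun l : Fin n → ℤ =>
      (if R l m then u l else 0) * E (kk m)) := by
    intro m
    apply Summable.of_norm_bounded habs
    intro l
    by_cases h : R l m
    · rw [if_pos h, norm_mul, hEnorm, mul_one]
    · simp [if_neg h]
  have step4 : trigInterpolant n N (fourierSeries n u) y - fourierSeries n u y
      = ∑ m : Fin n → Fin (2*N), ∑' l : Fin n → ℤ,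
          (if R l m then u l * (E (kk m) - E l) else 0) := by
    rw [step2, step3, ← Finset.sum_sub_distrib]
    refine Finset.sum_congr rfl fun m _ => ?_
    rw [← Summable.tsum_sub (hsum_ite2 m) (hsum_ite m)]
    refine tsum_congr fun l => ?_
    by_cases h : R l m
    · rw [if_pos h, if_pos h, if_pos h]
      ring
    · rw [if_neg h, if_neg h, if_neg h]
      ring
  -- bound
  rw [step4]
  have hHle : ∀ (m : Fin n → Fin (2*N)) (l : Fin n → ℤ),
      ‖(if R l m then u l * (E (kk m) - E l) else 0)‖
        ≤ (if R l m then (if l = kk m then 0 else 2 * ‖u l‖) else 0) := by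
    intro m l
    by_cases h : R l m
    · rw [if_pos h, if_pos h]
      by_cases h2 : l = kk m
      · rw [if_pos h2, h2]
        simp
      · rw [if_neg h2, norm_mul]
        have : ‖E (kk m) - E l‖ ≤ 2 := by
          calc ‖E (kk m) - E l‖ ≤ ‖E (kk m)‖ + ‖E l‖ := norm_sub_le _ _
            _ = 2 := by rw [hEnorm, hEnorm]; norm_num
        calc ‖u l‖ * ‖E (kk m) - E l‖ ≤ ‖u l‖ * 2 :=
              mul_le_mul_of_nonneg_left this (norm_nonneg _)
          _ = 2 * ‖u l‖ := by ring
    · rw [if_neg h, if_neg h]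
      simp
  have hHsummable : ∀ m : Fin n → Fin (2*N), Summable (fun l : Fin n → ℤ =>
      (if R l m then (if l = kk m then 0 else 2 * ‖u l‖) else 0)) := by
    intro m
    apply Summable.of_nonneg_of_le (fun l => by positivity) (fun l => ?_) (habs.mul_left 2)
    by_cases h : R l m
    · rw [if_pos h]
      by_cases h2 : l = kk m
      · rw [if_pos h2]; positivity
      · rw [if_neg h2]
    · rw [if_neg h]; positivity
  have hnormsummable : ∀ m : Fin n → Fin (2*N), Summable (fun l : Fin n → ℤ =>
      ‖(if R l m then u l * (E (kk m) - E l) else 0)‖) := by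
    intro m
    exact Summable.of_nonneg_of_le (fun l => norm_nonneg _) (fun l => hHle m l) (hHsummable m)
  have htailsummable : Summable (fun l : Fin n → ℤ =>
      (if znrm n l < (N:ℝ) then 0 else 2 * ‖u l‖)) := by
    apply Summable.of_nonneg_of_le (fun l => by positivity) (fun l => ?_) (habs.mul_left 2)
    by_cases h : znrm n l < (N:ℝ)
    · rw [if_pos h]; positivity
    · rw [if_neg h]
  -- the m-sum of H is at most the tail function
  have hmsum : ∀ l : Fin n → ℤ,
      (∑ m : Fin n → Fin (2*N), (if R l m then (if l = kk m then 0 else 2 * ‖u l‖) else 0))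
        ≤ (if znrm n l < (N:ℝ) then 0 else 2 * ‖u l‖) := by
    intro l
    obtain ⟨m₀, hm₀, huniq⟩ := exists_unique_res hN l
    rw [Finset.sum_eq_single m₀ (fun b _ hb => if_neg (fun hRb => hb (huniq b hRb)))
      (fun hnot => absurd (Finset.mem_univ m₀) hnot), if_pos hm₀]
    by_cases h2 : l = kk m₀
    · rw [if_pos h2]
      by_cases h3 : znrm n l < (N:ℝ)
      · rw [if_pos h3]
      · rw [if_neg h3]; positivity
    · rw [if_neg h2]
      have : ¬ (znrm n l < (N:ℝ)) := by
        intro hlt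
        apply h2
        -- all coordinates are in [-N, N), so l is its own residue
        have hcoord : ∀ i, -(N:ℤ) ≤ l i ∧ l i < N := by
          intro i
          have h1 : |((l i : ℝ))| ≤ znrm n l := abs_le_znrm n l i
          have h2' : |((l i : ℝ))| < (N:ℝ) := lt_of_le_of_lt h1 hlt
          have h3 : ((|l i| : ℤ) : ℝ) < (((N:ℤ)):ℝ) := by
            rw [Int.cast_abs]
            push_cast
            exact h2'
          have h4 : |l i| < (N:ℤ) := by exact_mod_cast h3
          rw [abs_lt] at h4
          omega
        set m' : Fin n → Fin (2*N) := fun i => ⟨(l i + N).toNat, by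
          have := hcoord i; omega⟩ with hm'
        have hRm' : R l m' := by
          intro i
          have hval : ((m' i : ℤ)) = l i + N := by
            simp only [hm']
            have := hcoord i
            omega
          rw [hval]
          simp
        have := huniq m' hRm'
        rw [← this] at hm₀ ⊢
        funext i
        have hval : ((m' i : ℤ)) = l i + N := by
          simp only [hm']
          have := hcoord i
          omega
        rw [hkk]
        simp only [hval]
        ring
      rw [if_neg this]
  calc ‖∑ m : Fin n → Fin (2*N), ∑' l : Fin n → ℤ,
        (if R l m then u l * (E (kk m) - E l) else 0)‖
      ≤ ∑ m : Fin n → Fin (2*N), ‖∑' l : Fin n → ℤ,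
          (if R l m then u l * (E (kk m) - E l) else 0)‖ := norm_sum_le _ _
    _ ≤ ∑ m : Fin n → Fin (2*N), ∑' l : Fin n → ℤ,
          ‖(if R l m then u l * (E (kk m) - E l) else 0)‖ :=
        Finset.sum_le_sum fun m _ => norm_tsum_le_tsum_norm (hnormsummable m)
    _ ≤ ∑ m : Fin n → Fin (2*N), ∑' l : Fin n → ℤ,
          (if R l m then (if l = kk m then 0 else 2 * ‖u l‖) else 0) :=
        Finset.sum_le_sum fun m _ => Summable.tsum_le_tsum (hHle m) (hnormsummable m) (hHsummable m)
    _ = ∑' l : Fin n → ℤ, ∑ m : Fin n → Fin (2*N),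
          (if R l m then (if l = kk m then 0 else 2 * ‖u l‖) else 0) :=
        (Summable.tsum_finsetSum (fun m _ => hHsummable m)).symm
    _ ≤ ∑' l : Fin n → ℤ, (if znrm n l < (N:ℝ) then 0 else 2 * ‖u l‖) := by
        apply Summable.tsum_le_tsum hmsum _ htailsummable
        exact summable_sum fun m _ => hHsummable m

lemma tail_bound {n : ℕ} (hn : 0 < n) {α : ℝ} (hα : (n:ℝ)/2 < α) {N : ℕ} (hN : 0 < N)
    (u : (Fin n → ℤ) → ℂ)
    (hB : Summable (fun k : Fin n → ℤ => znrm n k ^ (4*α) * ‖u k‖^2)) :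
    (∑' l : Fin n → ℤ, (if znrm n l < (N:ℝ) then 0 else 2 * ‖u l‖))
      ≤ (2 * Real.sqrt (∑' l : Fin n → ℤ, (max 1 (znrm n l)) ^ (-(2*α)))) * (N:ℝ)^(-α) *
          Real.sqrt (∑' k : Fin n → ℤ, znrm n k ^ (4*α) * ‖u k‖^2) := by
  have hαpos : 0 < α := lt_of_le_of_lt (by positivity) hα
  have h2α : (n:ℝ) < 2*α := by linarith
  have hN1 : (1:ℝ) ≤ (N:ℝ) := by exact_mod_cast hN
  set f : (Fin n → ℤ) → ℝ :=
    fun l => if znrm n l < (N:ℝ) then 0 else (znrm n l) ^ (-(2*α)) with hf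
  set g : (Fin n → ℤ) → ℝ := fun l => (znrm n l) ^ (2*α) * ‖u l‖ with hg
  have hf0 : ∀ l, 0 ≤ f l := by
    intro l
    simp only [hf]
    by_cases h : znrm n l < (N:ℝ)
    · rw [if_pos h]
    · rw [if_neg h]
      exact Real.rpow_nonneg (znrm_nonneg n l) _
  have hg0 : ∀ l, 0 ≤ g l := fun l =>
    mul_nonneg (Real.rpow_nonneg (znrm_nonneg n l) _) (norm_nonneg _)
  have hfg : ∀ l, (if znrm n l < (N:ℝ) then 0 else 2 * ‖u l‖) = 2 * (f l * g l) := by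
    intro l
    simp only [hf, hg]
    by_cases h : znrm n l < (N:ℝ)
    · rw [if_pos h, if_pos h]
      ring
    · rw [if_neg h, if_neg h]
      push_neg at h
      have hpos : 0 < znrm n l := lt_of_lt_of_le (lt_of_lt_of_le one_pos hN1) h
      rw [show (znrm n l) ^ (-(2*α)) * ((znrm n l) ^ (2*α) * ‖u l‖)
          = ((znrm n l) ^ (-(2*α)) * (znrm n l) ^ (2*α)) * ‖u l‖ by ring,
        ← Real.rpow_add hpos, neg_add_cancel, Real.rpow_zero, one_mul]
  have hfsq_le : ∀ l, f l ^ 2 ≤ (N:ℝ) ^ (-(2*α)) * (max 1 (znrm n l)) ^ (-(2*α)) := by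
    intro l
    by_cases h : znrm n l < (N:ℝ)
    · simp only [hf, if_pos h]
      have h1 : (0:ℝ) ≤ (N:ℝ) ^ (-(2*α)) := Real.rpow_nonneg (by positivity) _
      have h2 : (0:ℝ) ≤ (max 1 (znrm n l)) ^ (-(2*α)) := Real.rpow_nonneg (by positivity) _
      nlinarith
    · push_neg at h
      simp only [hf, if_neg (not_lt.2 h)]
      have h1 : (1:ℝ) ≤ znrm n l := le_trans hN1 h
      have hpos : (0:ℝ) < znrm n l := lt_of_lt_of_le one_pos h1
      have heq : (znrm n l ^ (-(2*α)))^2 = znrm n l ^ (-(2*α)) * znrm n l ^ (-(2*α)) := sq _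
      rw [heq]
      apply mul_le_mul
      · exact Real.rpow_le_rpow_of_nonpos (by positivity) h (by linarith)
      · rw [max_eq_right h1]
      · exact Real.rpow_nonneg hpos.le _
      · exact Real.rpow_nonneg (by positivity) _
  have hS : Summable (fun l : Fin n → ℤ => (max 1 (znrm n l)) ^ (-(2*α))) :=
    summable_max_znrm_rpow hn h2α
  have hfsq : Summable (fun l => f l ^ 2) :=
    Summable.of_nonneg_of_le (fun l => sq_nonneg _) hfsq_le (hS.mul_left _)
  have hgsq_eq : ∀ l, g l ^ 2 = znrm n l ^ (4*α) * ‖u l‖^2 := by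
    intro l
    simp only [hg]
    rw [mul_pow]
    congr 1
    rw [← Real.rpow_natCast ((znrm n l) ^ (2*α)) 2, ← Real.rpow_mul (znrm_nonneg n l)]
    congr 1
    push_cast
    ring
  have hgsq : Summable (fun l => g l ^ 2) := by
    rw [show (fun l => g l ^ 2) = (fun l => znrm n l ^ (4*α) * ‖u l‖^2) from funext hgsq_eq]
    exact hB
  have hCS := tsum_mul_le_sqrt_mul_sqrt f g hf0 hg0 hfsq hgsq
  have hfg_summable : Summable (fun l => f l * g l) := by
    apply Summable.of_nonneg_of_le (fun l => mul_nonneg (hf0 l) (hg0 l))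
      (fun l => ?_) ((hfsq.add hgsq).div_const 2)
    have := two_mul_le_add_sq (f l) (g l)
    linarith
  calc (∑' l : Fin n → ℤ, (if znrm n l < (N:ℝ) then 0 else 2 * ‖u l‖))
      = 2 * ∑' l, f l * g l := by
        rw [← tsum_mul_left]
        exact tsum_congr hfg
    _ ≤ 2 * (Real.sqrt (∑' l, f l ^ 2) * Real.sqrt (∑' l, g l ^ 2)) := by linarith
    _ ≤ 2 * ((Real.sqrt ((N:ℝ) ^ (-(2*α)) * ∑' l, (max 1 (znrm n l)) ^ (-(2*α)))) *
          Real.sqrt (∑' l, g l ^ 2)) := by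
        apply mul_le_mul_of_nonneg_left _ (by norm_num : (0:ℝ) ≤ 2)
        apply mul_le_mul_of_nonneg_right _ (Real.sqrt_nonneg _)
        apply Real.sqrt_le_sqrt
        rw [← tsum_mul_left]
        exact Summable.tsum_le_tsum hfsq_le hfsq (hS.mul_left _)
    _ = (2 * Real.sqrt (∑' l : Fin n → ℤ, (max 1 (znrm n l)) ^ (-(2*α)))) * (N:ℝ)^(-α) *
          Real.sqrt (∑' k : Fin n → ℤ, znrm n k ^ (4*α) * ‖u k‖^2) := by
        rw [Real.sqrt_mul (Real.rpow_nonneg (by positivity) _)]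
        have hsq : Real.sqrt ((N:ℝ) ^ (-(2*α))) = (N:ℝ)^(-α) := by
          have h1 : (N:ℝ) ^ (-(2*α)) = ((N:ℝ)^(-α))^(2:ℕ) := by
            rw [← Real.rpow_natCast ((N:ℝ)^(-α)) 2,
              ← Real.rpow_mul (by positivity : (0:ℝ) ≤ (N:ℝ))]
            congr 1
            push_cast
            ring
          rw [h1, Real.sqrt_sq (Real.rpow_nonneg (by positivity) _)]
        rw [hsq, tsum_congr hgsq_eq]
        ring


/-- Spectral accuracy of trigonometric interpolation: for `α > n/2` there is a
constant `C` such that `‖I_N U − U‖ ≤ C N^{-α} |u|_{X_α}` for every `N` and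
every `U` with Fourier coefficients `u` of finite `X_α`-norm. -/
theorem trig_interpolation_error
    (n : ℕ) (hn : 0 < n) (α : ℝ) (hα : (n : ℝ) / 2 < α) :
    ∃ C : ℝ, 0 < C ∧
      ∀ N : ℕ, 0 < N →
        ∀ u : (Fin n → ℤ) → ℂ,
          Summable (fun k : Fin n → ℤ =>
            (1 + Real.sqrt (∑ j, ((k j : ℝ)) ^ 2) ^ (4 * α)) * ‖u k‖ ^ 2) →
          L2NormPeriodic n
              (fun y => trigInterpolant n N (fourierSeries n u) y - fourierSeries n u y)
            ≤ C * (N : ℝ) ^ (-α) *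
                Real.sqrt (∑' k : Fin n → ℤ,
                  Real.sqrt (∑ j, ((k j : ℝ)) ^ 2) ^ (4 * α) * ‖u k‖ ^ 2) := by
  have hαpos : 0 < α := lt_of_le_of_lt (by positivity) hα
  have h4α : (n:ℝ) < 4 * α := by linarith
  set S : ℝ := ∑' l : Fin n → ℤ, (max 1 (znrm n l)) ^ (-(2*α)) with hSdef
  have hS0 : 0 ≤ S := tsum_nonneg fun l => Real.rpow_nonneg (by positivity) _
  refine ⟨2 * Real.sqrt S + 1, by positivity, ?_⟩
  intro N hN u hsum
  have hsum' : Summable (fun k : Fin n → ℤ => (1 + znrm n k ^ (4*α)) * ‖u k‖^2) := hsum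
  have hw0 : ∀ k : Fin n → ℤ, (0:ℝ) ≤ znrm n k ^ (4*α) :=
    fun k => Real.rpow_nonneg (znrm_nonneg n k) _
  have hB : Summable (fun k : Fin n → ℤ => znrm n k ^ (4*α) * ‖u k‖^2) := by
    apply Summable.of_nonneg_of_le (fun k => mul_nonneg (hw0 k) (sq_nonneg _))
      (fun k => ?_) hsum'
    apply mul_le_mul_of_nonneg_right _ (sq_nonneg _)
    linarith [hw0 k]
  have habs : Summable (fun k : Fin n → ℤ => ‖u k‖) := by
    have hinv : Summable (fun k : Fin n → ℤ => (1 + znrm n k ^ (4*α))⁻¹) :=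
      summable_one_add_znrm_rpow_inv hn h4α
    apply Summable.of_nonneg_of_le (fun k => norm_nonneg _) (fun k => ?_)
      ((hinv.add hsum').div_const 2)
    set w : ℝ := znrm n k ^ (4*α) with hwdef
    have hw : 0 ≤ w := hw0 k
    have h1w : (0:ℝ) < 1 + w := by linarith
    have key : 2 * Real.sqrt ((1+w)⁻¹) * (Real.sqrt (1+w) * ‖u k‖)
        ≤ (Real.sqrt ((1+w)⁻¹))^2 + (Real.sqrt (1+w) * ‖u k‖)^2 :=
      two_mul_le_add_sq _ _
    have h2 : Real.sqrt ((1+w)⁻¹) * Real.sqrt (1+w) = 1 := by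
      rw [← Real.sqrt_mul (by positivity) _, inv_mul_cancel₀ h1w.ne', Real.sqrt_one]
    have h3 : (Real.sqrt ((1+w)⁻¹))^2 = (1+w)⁻¹ := Real.sq_sqrt (by positivity)
    have h4 : (Real.sqrt (1+w) * ‖u k‖)^2 = (1+w) * ‖u k‖^2 := by
      rw [mul_pow, Real.sq_sqrt h1w.le]
    have h5 : 2 * Real.sqrt ((1+w)⁻¹) * (Real.sqrt (1+w) * ‖u k‖) = 2 * ‖u k‖ := by
      rw [show 2 * Real.sqrt ((1+w)⁻¹) * (Real.sqrt (1+w) * ‖u k‖)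
          = 2 * (Real.sqrt ((1+w)⁻¹) * Real.sqrt (1+w)) * ‖u k‖ by ring, h2]
      ring
    rw [h5, h3, h4] at key
    linarith
  -- continuity
  have hcontF : Continuous (fourierSeries n u) := by
    apply continuous_tsum (f := fun (k : Fin n → ℤ) (y : Fin n → ℝ) =>
      u k * Complex.exp (Complex.I * ((∑ j, (k j : ℝ) * y j : ℝ) : ℂ)))
      (fun k => by fun_prop) habs
    intro k y
    rw [norm_mul, norm_exp_I_mul, mul_one]
  have hcontI : Continuous (fun y => trigInterpolant n N (fourierSeries n u) y) := by
    apply continuous_finset_sum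
    intro m _
    apply Continuous.mul continuous_const
    fun_prop
  have hT0 : (0:ℝ) ≤ ∑' l : Fin n → ℤ, (if znrm n l < (N:ℝ) then 0 else 2 * ‖u l‖) := by
    apply tsum_nonneg
    intro l
    by_cases h : znrm n l < (N:ℝ)
    · rw [if_pos h]
    · rw [if_neg h]; positivity
  have hL2 : L2NormPeriodic n
      (fun y => trigInterpolant n N (fourierSeries n u) y - fourierSeries n u y)
      ≤ ∑' l : Fin n → ℤ, (if znrm n l < (N:ℝ) then 0 else 2 * ‖u l‖) :=
    L2NormPeriodic_le_of_bound n _ (hcontI.sub hcontF) _ hT0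
      (fun y => pointwise_bound hN u habs y)
  have htail := tail_bound hn hα hN u hB
  have hfinal : (2 * Real.sqrt S) * (N:ℝ)^(-α) *
        Real.sqrt (∑' k : Fin n → ℤ, znrm n k ^ (4*α) * ‖u k‖^2)
      ≤ (2 * Real.sqrt S + 1) * (N:ℝ)^(-α) *
        Real.sqrt (∑' k : Fin n → ℤ, znrm n k ^ (4*α) * ‖u k‖^2) := by
    apply mul_le_mul_of_nonneg_right _ (Real.sqrt_nonneg _)
    apply mul_le_mul_of_nonneg_right _ (Real.rpow_nonneg (by positivity) _)
    linarith
  exact le_trans hL2 (le_trans htail hfinal)
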